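/- Let k be a field, A an associative unital k-algebra, and R an invertible element of A⊗A such that R²³R¹³R¹² = R¹²R²³ holds in A⊗A⊗A, where R¹², R²³, R¹³ denote the images of R under the three algebra embeddings A⊗A → A⊗A⊗A given on simple tensors by a⊗b ↦ a⊗b⊗1, a⊗b ↦ 1⊗a⊗b, and a⊗b ↦ a⊗1⊗b respectively. Define Δ : A → A⊗A by Δ(a) := R(1⊗a)R⁻¹. Then Δ is an algebra homomorphism and is coassociative, i.e. (Δ⊗I)∘Δ = (I⊗Δ)∘Δ as maps A → A⊗A⊗A. -/
import Mathlib

open TensorProduct LinearMap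

variable (k A : Type*) [Field k] [Ring A] [Algebra k A]

/-- The algebra embedding `A ⊗ A → A ⊗ A ⊗ A`, `a ⊗ b ↦ a ⊗ b ⊗ 1`. -/
noncomputable def emb12 : A ⊗[k] A →ₐ[k] A ⊗[k] (A ⊗[k] A) :=
  Algebra.TensorProduct.map (AlgHom.id k A) Algebra.TensorProduct.includeLeft

/-- The algebra embedding `A ⊗ A → A ⊗ A ⊗ A`, `a ⊗ b ↦ a ⊗ 1 ⊗ b`. -/
noncomputable def emb13 : A ⊗[k] A →ₐ[k] A ⊗[k] (A ⊗[k] A) :=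
  Algebra.TensorProduct.map (AlgHom.id k A) Algebra.TensorProduct.includeRight

/-- The algebra embedding `A ⊗ A → A ⊗ A ⊗ A`, `a ⊗ b ↦ 1 ⊗ a ⊗ b`. -/
noncomputable def emb23 : A ⊗[k] A →ₐ[k] A ⊗[k] (A ⊗[k] A) :=
  Algebra.TensorProduct.includeRight

/-- The comultiplication `Δ(a) = R (1 ⊗ a) R⁻¹`, as a `k`-linear map. -/
noncomputable def deltaMap (R : (A ⊗[k] A)ˣ) : A →ₗ[k] A ⊗[k] A :=
  LinearMap.mulRight k ((R⁻¹ : (A ⊗[k] A)ˣ) : A ⊗[k] A) ∘ₗ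
    LinearMap.mulLeft k ((R : (A ⊗[k] A)ˣ) : A ⊗[k] A) ∘ₗ
    (Algebra.TensorProduct.includeRight : A →ₐ[k] A ⊗[k] A).toLinearMap

lemma unitsConjMul {M : Type*} [Monoid M] (u : Mˣ) (x y : M) :
    ↑u * (x * y) * ↑u⁻¹ = (↑u * x * ↑u⁻¹) * (↑u * y * ↑u⁻¹) := by
  simp only [mul_assoc]
  rw [Units.inv_mul_cancel_left]

lemma deltaMap_apply (R : (A ⊗[k] A)ˣ) (a : A) :
    deltaMap k A R a = ↑R * ((1 : A) ⊗ₜ[k] a) * ↑R⁻¹ := by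
  simp [deltaMap, mul_assoc]

lemma emb12_comm (z : A ⊗[k] A) (a : A) :
    emb12 k A z * ((1:A) ⊗ₜ[k] ((1:A) ⊗ₜ[k] a)) = ((1:A) ⊗ₜ[k] ((1:A) ⊗ₜ[k] a)) * emb12 k A z := by
  induction z using TensorProduct.induction_on with
  | zero => simp
  | tmul x y =>
      simp [emb12, Algebra.TensorProduct.tmul_mul_tmul]
  | add u v hu hv =>
      simp only [map_add, add_mul, mul_add, hu, hv]

lemma lTensor_delta (R : (A ⊗[k] A)ˣ) (z : A ⊗[k] A) :
    (deltaMap k A R).lTensor A z = emb23 k A ↑R * emb13 k A z * emb23 k A ↑R⁻¹ := by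
  induction z using TensorProduct.induction_on with
  | zero => simp
  | tmul x y =>
      simp [emb23, emb13, deltaMap_apply, Algebra.TensorProduct.tmul_mul_tmul, mul_assoc]
  | add u v hu hv =>
      simp only [map_add, add_mul, mul_add, hu, hv]

lemma assoc_tmul' (w : A ⊗[k] A) (y : A) :
    (TensorProduct.assoc k A A A) (w ⊗ₜ[k] y) = emb12 k A w * ((1:A) ⊗ₜ[k] ((1:A) ⊗ₜ[k] y)) := by
  induction w using TensorProduct.induction_on with
  | zero => rw [zero_tmul, LinearEquiv.map_zero, map_zero, zero_mul]
  | tmul p q => simp [emb12, Algebra.TensorProduct.tmul_mul_tmul]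
  | add u v hu hv => rw [add_tmul, LinearEquiv.map_add, map_add, add_mul, hu, hv]

lemma assoc_rTensor_delta (R : (A ⊗[k] A)ˣ) (z : A ⊗[k] A) :
    (TensorProduct.assoc k A A A) ((deltaMap k A R).rTensor A z)
      = emb12 k A ↑R * emb23 k A z * emb12 k A ↑R⁻¹ := by
  induction z using TensorProduct.induction_on with
  | zero => rw [map_zero, LinearEquiv.map_zero, map_zero, mul_zero, zero_mul]
  | tmul x y =>
      rw [rTensor_tmul, deltaMap_apply, assoc_tmul']
      rw [map_mul, map_mul]
      have h1 : emb12 k A ((1:A) ⊗ₜ[k] x) * ((1:A) ⊗ₜ[k] ((1:A) ⊗ₜ[k] y))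
          = emb23 k A (x ⊗ₜ[k] y) := by
        simp [emb12, emb23, Algebra.TensorProduct.tmul_mul_tmul]
      calc emb12 k A ↑R * emb12 k A ((1:A) ⊗ₜ[k] x) * emb12 k A ↑R⁻¹ *
            ((1:A) ⊗ₜ[k] ((1:A) ⊗ₜ[k] y))
          = emb12 k A ↑R * (emb12 k A ((1:A) ⊗ₜ[k] x) * ((1:A) ⊗ₜ[k] ((1:A) ⊗ₜ[k] y))) *
            emb12 k A ↑R⁻¹ := by
            rw [mul_assoc (emb12 k A ↑R * emb12 k A ((1:A) ⊗ₜ[k] x)), emb12_comm,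
              ← mul_assoc, mul_assoc (emb12 k A ↑R)]
        _ = emb12 k A ↑R * emb23 k A (x ⊗ₜ[k] y) * emb12 k A ↑R⁻¹ := by rw [h1]
  | add u v hu hv =>
      rw [map_add, LinearEquiv.map_add, map_add, mul_add, add_mul, hu, hv]

/-- if `R` is an invertible element of `A ⊗ A` satisfying the Hopf equation
`R²³R¹³R¹² = R¹²R²³` in `A ⊗ A ⊗ A`, then `Δ(a) := R(1 ⊗ a)R⁻¹` is a (unital,
multiplicative) algebra homomorphism and is coassociative. -/
theorem deltaMap_algHom_and_coassoc (R : (A ⊗[k] A)ˣ)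
    (hR : emb23 k A ↑R * emb13 k A ↑R * emb12 k A ↑R = emb12 k A ↑R * emb23 k A ↑R) :
    (deltaMap k A R 1 = 1) ∧
    (∀ a b : A, deltaMap k A R (a * b) = deltaMap k A R a * deltaMap k A R b) ∧
    ((TensorProduct.assoc k A A A).symm.toLinearMap ∘ₗ
        (deltaMap k A R).lTensor A ∘ₗ deltaMap k A R
      = (deltaMap k A R).rTensor A ∘ₗ deltaMap k A R) := by
  refine ⟨?_, ?_, ?_⟩
  · rw [deltaMap_apply, ← Algebra.TensorProduct.one_def, mul_one, R.mul_inv]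
  · intro a b
    rw [deltaMap_apply, deltaMap_apply, deltaMap_apply]
    have h : ((1:A) ⊗ₜ[k] (a*b)) = ((1:A) ⊗ₜ[k] a) * ((1:A) ⊗ₜ[k] b) := by
      simp [Algebra.TensorProduct.tmul_mul_tmul]
    rw [h, unitsConjMul]
  · ext a
    simp only [coe_comp, Function.comp_apply, LinearEquiv.coe_coe]
    rw [lTensor_delta, LinearEquiv.symm_apply_eq, assoc_rTensor_delta, deltaMap_apply]
    rw [map_mul, map_mul, map_mul, map_mul]
    have hX13 : emb13 k A ((1:A) ⊗ₜ[k] a) = (1:A) ⊗ₜ[k] ((1:A) ⊗ₜ[k] a) := by simp [emb13]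
    have hX23 : emb23 k A ((1:A) ⊗ₜ[k] a) = (1:A) ⊗ₜ[k] ((1:A) ⊗ₜ[k] a) := by simp [emb23]
    rw [hX13, hX23]
    set X : A ⊗[k] (A ⊗[k] A) := (1:A) ⊗ₜ[k] ((1:A) ⊗ₜ[k] a) with hX
    set f12 : (A ⊗[k] A) →* (A ⊗[k] (A ⊗[k] A)) := (emb12 k A : A ⊗[k] A →+* _).toMonoidHom
    set f13 : (A ⊗[k] A) →* (A ⊗[k] (A ⊗[k] A)) := (emb13 k A : A ⊗[k] A →+* _).toMonoidHom
    set f23 : (A ⊗[k] A) →* (A ⊗[k] (A ⊗[k] A)) := (emb23 k A : A ⊗[k] A →+* _).toMonoidHom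
    set u12 := Units.map f12 R with hu12
    set u13 := Units.map f13 R with hu13
    set u23 := Units.map f23 R with hu23
    have e12 : emb12 k A (↑R : A ⊗[k] A) = ↑u12 := rfl
    have e13 : emb13 k A (↑R : A ⊗[k] A) = ↑u13 := rfl
    have e23 : emb23 k A (↑R : A ⊗[k] A) = ↑u23 := rfl
    have e12' : emb12 k A (↑R⁻¹ : A ⊗[k] A) = ↑(u12⁻¹) := by
      rw [hu12, ← map_inv]; rfl
    have e13' : emb13 k A (↑R⁻¹ : A ⊗[k] A) = ↑(u13⁻¹) := by
      rw [hu13, ← map_inv]; rfl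
    have e23' : emb23 k A (↑R⁻¹ : A ⊗[k] A) = ↑(u23⁻¹) := by
      rw [hu23, ← map_inv]; rfl
    rw [e12, e13, e23, e12', e13', e23']
    have hu : u23 * u13 * u12 = u12 * u23 := by
      ext
      simpa [Units.val_mul, e12, e13, e23] using hR
    have hc : (↑u12 : A ⊗[k] (A ⊗[k] A)) * X = X * ↑u12 := (emb12_comm k A (↑R) a).symm ▸
      (emb12_comm k A (↑R) a)
    have hmid : (↑u12 : A ⊗[k] (A ⊗[k] A)) * X * ↑(u12⁻¹) = X := by
      rw [hc, mul_assoc, u12.mul_inv, mul_one]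
    calc (↑u23 : A ⊗[k] (A ⊗[k] A)) * (↑u13 * X * ↑(u13⁻¹)) * ↑(u23⁻¹)
        = ↑(u23 * u13) * X * ↑((u23 * u13)⁻¹) := by
          simp [Units.val_mul, mul_inv_rev, mul_assoc]
      _ = ↑(u23 * u13) * (↑u12 * X * ↑(u12⁻¹)) * ↑((u23 * u13)⁻¹) := by rw [hmid]
      _ = ↑(u23 * u13 * u12) * X * ↑((u23 * u13 * u12)⁻¹) := by
          simp [Units.val_mul, mul_inv_rev, mul_assoc]
      _ = ↑(u12 * u23) * X * ↑((u12 * u23)⁻¹) := by rw [hu]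
      _ = ↑u12 * (↑u23 * X * ↑(u23⁻¹)) * ↑(u12⁻¹) := by
          simp [Units.val_mul, mul_inv_rev, mul_assoc]
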